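/- Assume f satisfies the separation hypothesis and that for every y ∈ M the fiber f⁻¹({y}) has exactly k elements, where k ≥ 2 is a fixed integer. Then for every x₀ ∈ M, the fiber π⁻¹(x₀) = { x ∈ M_f : x(0) = x₀ }, equipped with the topology induced by the metric d, is homeomorphic to the Cantor space ℕ → Fin k with the product topology (each factor Fin k being discrete). -/

import Mathlib

open Metric Set

/-- The metric on the space of orbits:
`d(x,y) = sup_{n ≥ 0} λⁿ · min (dist (x (-n)) (y (-n))) 1`. -/
noncomputable def orbitDist {M : Type*} [MetricSpace M] (lam : ℝ) (x y : ℤ → M) : ℝ :=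
  ⨆ n : ℕ, lam ^ n * min (dist (x (-(n : ℤ))) (y (-(n : ℤ)))) 1

/-- The fiber `π⁻¹(x₀)` of the projection `π : M_f → M`, i.e. the set of full orbits
of `f` passing through `x₀` at time `0`. -/
def OrbitFiber {M : Type*} (f : M → M) (x₀ : M) : Type _ :=
  {x : ℤ → M // (∀ n : ℤ, f (x n) = x (n + 1)) ∧ x 0 = x₀}

/-- The topology on the fiber `π⁻¹(x₀)` induced by the metric `d`,
generated by the open `d`-balls. -/
noncomputable def orbitFiberTopology {M : Type*} [MetricSpace M] (f : M → M) (lam : ℝ)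
    (x₀ : M) : TopologicalSpace (OrbitFiber f x₀) :=
  TopologicalSpace.generateFrom
    {U | ∃ (y : OrbitFiber f x₀) (r : ℝ), 0 < r ∧
      U = {z : OrbitFiber f x₀ | orbitDist lam y.1 z.1 < r}}

section Aux

variable {M : Type*} {f : M → M} {k : ℕ}

noncomputable def preimEquiv (hk : 0 < k) (hfib : ∀ y : M, (f ⁻¹' {y}).ncard = k)
    (a : M) : (f ⁻¹' {a}) ≃ Fin k := by
  have hcard : Nat.card (f ⁻¹' {a}) = k := by
    rw [Nat.card_coe_set_eq]; exact hfib a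
  have : Finite (f ⁻¹' {a}) := Nat.finite_of_card_ne_zero (by omega)
  have : Fintype (f ⁻¹' {a}) := Fintype.ofFinite _
  exact Fintype.equivFinOfCardEq (by rw [← Nat.card_eq_fintype_card, hcard])

variable (f) (x₀ : M) (E : ∀ a : M, (f ⁻¹' {a}) ≃ Fin k)

lemma E_congr {a b : M} (hab : a = b) {v w : M} (hvw : v = w) (hv : v ∈ f ⁻¹' {a})
    (hw : w ∈ f ⁻¹' {b}) : E a ⟨v, hv⟩ = E b ⟨w, hw⟩ := by
  subst hab; subst hvw; rfl

noncomputable def backSeq (s : ℕ → Fin k) : ℕ → M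
  | 0 => x₀
  | n+1 => ((E (backSeq s n)).symm (s n)).1

lemma f_backSeq (s : ℕ → Fin k) (n : ℕ) : f (backSeq f x₀ E s (n+1)) = backSeq f x₀ E s n :=
  ((E (backSeq f x₀ E s n)).symm (s n)).2

noncomputable def orbitOf (s : ℕ → Fin k) : ℤ → M :=
  fun m => if 0 ≤ m then f^[m.toNat] x₀ else backSeq f x₀ E s (-m).toNat

lemma orbitOf_neg (s : ℕ → Fin k) (j : ℕ) :
    orbitOf f x₀ E s (-(j : ℤ)) = backSeq f x₀ E s j := by
  rcases Nat.eq_zero_or_pos j with h | h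
  · subst h; simp [orbitOf, backSeq]
  · have h1 : ¬ (0 : ℤ) ≤ -(j : ℤ) := by omega
    simp only [orbitOf, if_neg h1, neg_neg, Int.toNat_natCast]

lemma orbitOf_mem (s : ℕ → Fin k) :
    (∀ n : ℤ, f (orbitOf f x₀ E s n) = orbitOf f x₀ E s (n + 1)) ∧ orbitOf f x₀ E s 0 = x₀ := by
  constructor
  · intro n
    rcases n with n | j
    · have h0 : ((n : ℤ)) + 1 = ((n + 1 : ℕ) : ℤ) := by push_cast; ring
      simp only [Int.ofNat_eq_coe, h0, orbitOf, if_pos (by positivity : (0:ℤ) ≤ (n:ℤ)),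
        if_pos (by positivity : (0:ℤ) ≤ ((n+1:ℕ):ℤ)), Int.toNat_natCast]
      rw [Function.iterate_succ_apply']
    · have h1 : Int.negSucc j = -((j+1 : ℕ) : ℤ) := by
        rw [Int.negSucc_eq]; push_cast; ring
      have h2 : Int.negSucc j + 1 = -((j : ℕ) : ℤ) := by
        rw [Int.negSucc_eq]; push_cast; ring
      have h3 : -((j+1 : ℕ) : ℤ) + 1 = -((j : ℕ) : ℤ) := by push_cast; ring
      rw [h1, h3, orbitOf_neg, orbitOf_neg]; exact f_backSeq f x₀ E s j
  · simp [orbitOf, backSeq]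

end Aux

section Aux2

variable {M : Type*} {f : M → M} {k : ℕ} (x₀ : M) (E : ∀ a : M, (f ⁻¹' {a}) ≃ Fin k)

lemma fiber_mem_code (x : OrbitFiber f x₀) (n : ℕ) :
    x.1 (-(n : ℤ) - 1) ∈ f ⁻¹' {x.1 (-(n : ℤ))} := by
  have := x.2.1 (-(n : ℤ) - 1)
  simp only [Set.mem_preimage, Set.mem_singleton_iff, this, sub_add_cancel]

noncomputable def fiberCode (x : OrbitFiber f x₀) (n : ℕ) : Fin k :=
  E (x.1 (-(n : ℤ))) ⟨x.1 (-(n : ℤ) - 1), fiber_mem_code x₀ x n⟩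

lemma fiber_pos (x : OrbitFiber f x₀) (n : ℕ) : x.1 (n : ℤ) = f^[n] x₀ := by
  induction n with
  | zero => exact x.2.2
  | succ m ih =>
    rw [Function.iterate_succ_apply', ← ih, x.2.1 (m : ℤ)]
    congr 1
    try push_cast
    try ring

lemma backSeq_fiberCode (x : OrbitFiber f x₀) (j : ℕ) :
    backSeq f x₀ E (fiberCode x₀ E x) j = x.1 (-(j : ℤ)) := by
  induction j with
  | zero => simp [backSeq, x.2.2]
  | succ m ih =>
    show ((E (backSeq f x₀ E (fiberCode x₀ E x) m)).symm (fiberCode x₀ E x m)).1 = _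
    rw [ih, show fiberCode x₀ E x m
        = E (x.1 (-(m : ℤ))) ⟨x.1 (-(m : ℤ) - 1), fiber_mem_code x₀ x m⟩ from rfl,
      Equiv.symm_apply_apply]
    show x.1 (-(m : ℤ) - 1) = _
    congr 1
    try push_cast
    try ring

noncomputable def fiberEquivCantor : OrbitFiber f x₀ ≃ (ℕ → Fin k) where
  toFun := fiberCode x₀ E
  invFun s := ⟨orbitOf f x₀ E s, orbitOf_mem f x₀ E s⟩
  left_inv x := by
    apply Subtype.ext
    funext m
    rcases m with n | j
    · show orbitOf f x₀ E (fiberCode x₀ E x) (n : ℤ) = x.1 (n : ℤ)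
      rw [fiber_pos x₀ x n]
      simp only [orbitOf, if_pos (by positivity : (0:ℤ) ≤ (n:ℤ)), Int.toNat_natCast]
    · have h1 : Int.negSucc j = -((j+1 : ℕ) : ℤ) := by rw [Int.negSucc_eq]; push_cast; ring
      show orbitOf f x₀ E (fiberCode x₀ E x) (Int.negSucc j) = x.1 (Int.negSucc j)
      rw [h1, orbitOf_neg, backSeq_fiberCode]
  right_inv s := by
    funext n
    set y : OrbitFiber f x₀ := ⟨orbitOf f x₀ E s, orbitOf_mem f x₀ E s⟩ with hy
    have hb : ∀ j : ℕ, y.1 (-(j:ℤ)) = backSeq f x₀ E s j := fun j => orbitOf_neg f x₀ E s j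
    have hv : y.1 (-(n:ℤ) - 1) = ((E (backSeq f x₀ E s n)).symm (s n)).1 := by
      rw [show -(n:ℤ) - 1 = -((n+1 : ℕ) : ℤ) by push_cast; ring]
      exact hb (n+1)
    show fiberCode x₀ E y n = s n
    calc fiberCode x₀ E y n
        = E (backSeq f x₀ E s n) ⟨((E (backSeq f x₀ E s n)).symm (s n)).1,
            ((E (backSeq f x₀ E s n)).symm (s n)).2⟩ := E_congr f E (hb n) hv _ _
      _ = s n := by rw [Subtype.coe_eta]; exact Equiv.apply_symm_apply _ _

end Aux2

section MetricAux

variable {M : Type*} [MetricSpace M]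

/-- Agreement of two orbits at the times `-1, …, -n`. -/
def Agr (n : ℕ) (x y : ℤ → M) : Prop :=
  ∀ j : ℕ, j < n → x (-((j : ℤ) + 1)) = y (-((j : ℤ) + 1))

variable {lam : ℝ}

lemma orbit_term_mem (hlam0 : 0 < lam) (hlam1 : lam < 1) (x y : ℤ → M) (m : ℕ) :
    0 ≤ lam ^ m * min (dist (x (-(m : ℤ))) (y (-(m : ℤ)))) 1 ∧
      lam ^ m * min (dist (x (-(m : ℤ))) (y (-(m : ℤ)))) 1 ≤ lam ^ m := by
  constructor
  · apply mul_nonneg (by positivity)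
    exact le_min dist_nonneg zero_le_one
  · calc lam ^ m * min (dist (x (-(m : ℤ))) (y (-(m : ℤ)))) 1 ≤ lam ^ m * 1 :=
        mul_le_mul_of_nonneg_left (min_le_right _ _) (by positivity)
    _ = lam ^ m := mul_one _

lemma orbit_bdd (hlam0 : 0 < lam) (hlam1 : lam < 1) (x y : ℤ → M) :
    BddAbove (Set.range fun m : ℕ => lam ^ m * min (dist (x (-(m : ℤ))) (y (-(m : ℤ)))) 1) := by
  refine ⟨1, ?_⟩
  rintro _ ⟨m, rfl⟩
  exact le_trans (orbit_term_mem hlam0 hlam1 x y m).2 (pow_le_one₀ hlam0.le hlam1.le)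

lemma orbitDist_lt_iff {f : M → M} (hsep : ∀ a b : M, a ≠ b → f a = f b → 1 ≤ dist a b)
    (hlam0 : 0 < lam) (hlam1 : lam < 1)
    {x y : ℤ → M} (hx : ∀ n : ℤ, f (x n) = x (n + 1)) (hy : ∀ n : ℤ, f (y n) = y (n + 1))
    (h0 : x 0 = y 0) {r : ℝ} {n : ℕ} (hn : lam ^ (n + 1) < r)
    (hn' : ∀ j : ℕ, j < n → r ≤ lam ^ (j + 1)) :
    orbitDist lam x y < r ↔ Agr n x y := by
  constructor
  · intro hd j hj
    induction j using Nat.strong_induction_on with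
    | _ j ih =>
      by_contra hne
      have hpar : x (-(j : ℤ)) = y (-(j : ℤ)) := by
        rcases Nat.eq_zero_or_pos j with h | h
        · subst h; simpa using h0
        · obtain ⟨i, rfl⟩ := Nat.exists_eq_add_of_lt h
          have := ih i (by omega) (by omega)
          simpa [show -((i : ℤ) + 1) = -((0 + i + 1 : ℕ) : ℤ) by push_cast; ring] using this
      have hfx : f (x (-((j : ℤ) + 1))) = x (-(j : ℤ)) := by
        have := hx (-((j : ℤ) + 1))
        rwa [show -((j : ℤ) + 1) + 1 = -(j : ℤ) by ring] at this
      have hfy : f (y (-((j : ℤ) + 1))) = y (-(j : ℤ)) := by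
        have := hy (-((j : ℤ) + 1))
        rwa [show -((j : ℤ) + 1) + 1 = -(j : ℤ) by ring] at this
      have hdist : 1 ≤ dist (x (-((j : ℤ) + 1))) (y (-((j : ℤ) + 1))) :=
        hsep _ _ hne (by rw [hfx, hfy, hpar])
      have hterm : lam ^ (j + 1) * min (dist (x (-((j+1 : ℕ) : ℤ))) (y (-((j+1 : ℕ) : ℤ)))) 1
          = lam ^ (j + 1) := by
        rw [show -((j + 1 : ℕ) : ℤ) = -((j : ℤ) + 1) by push_cast; ring, min_eq_right hdist,
          mul_one]
      have hle : lam ^ (j + 1) ≤ orbitDist lam x y := by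
        rw [← hterm]
        exact le_ciSup (orbit_bdd hlam0 hlam1 x y) (j + 1)
      exact absurd hd (not_lt.2 (le_trans (hn' j hj) hle))
  · intro hagr
    have hub : ∀ m : ℕ, lam ^ m * min (dist (x (-(m : ℤ))) (y (-(m : ℤ)))) 1 ≤ lam ^ (n + 1) := by
      intro m
      rcases le_or_gt m n with h | h
      · have hxy : x (-(m : ℤ)) = y (-(m : ℤ)) := by
          rcases Nat.eq_zero_or_pos m with h' | h'
          · subst h'; simpa using h0
          · obtain ⟨i, rfl⟩ := Nat.exists_eq_add_of_lt h'
            have := hagr i (by omega)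
            simpa [show -((0 + i + 1 : ℕ) : ℤ) = -((i : ℤ) + 1) by push_cast; ring] using this
        rw [hxy]
        simp only [dist_self]
        rw [min_eq_left zero_le_one, mul_zero]
        positivity
      · exact le_trans (orbit_term_mem hlam0 hlam1 x y m).2
          (pow_le_pow_of_le_one hlam0.le hlam1.le (by omega))
    calc orbitDist lam x y ≤ lam ^ (n + 1) := ciSup_le hub
      _ < r := hn

lemma exists_pow_index (hlam0 : 0 < lam) (hlam1 : lam < 1) {r : ℝ} (hr : 0 < r) :
    ∃ j : ℕ, lam ^ (j + 1) < r := by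
  obtain ⟨m, hm⟩ := exists_pow_lt_of_lt_one hr hlam1
  exact ⟨m, lt_of_le_of_lt (pow_le_pow_of_le_one hlam0.le hlam1.le (by omega)) hm⟩

end MetricAux

section Aux3

variable {M : Type*} {f : M → M} {k : ℕ} (x₀ : M) (E : ∀ a : M, (f ⁻¹' {a}) ≃ Fin k)

lemma code_pos_agree (x y : OrbitFiber f x₀) {n : ℕ}
    (hc : ∀ j : ℕ, j < n → fiberCode x₀ E x j = fiberCode x₀ E y j) :
    ∀ j : ℕ, j ≤ n → x.1 (-(j : ℤ)) = y.1 (-(j : ℤ)) := by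
  intro j
  induction j with
  | zero => intro _; simp only [Nat.cast_zero, neg_zero]; rw [x.2.2, y.2.2]
  | succ m ih =>
    intro hm
    have hpos := ih (by omega)
    have hmem : y.1 (-(m : ℤ) - 1) ∈ f ⁻¹' {x.1 (-(m : ℤ))} := by
      rw [hpos]; exact fiber_mem_code x₀ y m
    have h1 : fiberCode x₀ E y m = E (x.1 (-(m : ℤ))) ⟨y.1 (-(m : ℤ) - 1), hmem⟩ :=
      E_congr f E hpos.symm rfl _ _
    have h2 : E (x.1 (-(m : ℤ))) ⟨x.1 (-(m : ℤ) - 1), fiber_mem_code x₀ x m⟩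
        = E (x.1 (-(m : ℤ))) ⟨y.1 (-(m : ℤ) - 1), hmem⟩ := (hc m (by omega)).trans h1
    have h4 := congrArg Subtype.val ((E (x.1 (-(m : ℤ)))).injective h2)
    rw [show -((m + 1 : ℕ) : ℤ) = -(m : ℤ) - 1 by push_cast; ring]
    exact h4

lemma agr_iff_code (x y : OrbitFiber f x₀) (n : ℕ) :
    Agr n x.1 y.1 ↔ ∀ j : ℕ, j < n → fiberCode x₀ E x j = fiberCode x₀ E y j := by
  constructor
  · intro hagr
    have hpos : ∀ j : ℕ, j ≤ n → x.1 (-(j : ℤ)) = y.1 (-(j : ℤ)) := by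
      intro j hj
      rcases Nat.eq_zero_or_pos j with h | h
      · subst h; simp only [Nat.cast_zero, neg_zero]; rw [x.2.2, y.2.2]
      · obtain ⟨i, rfl⟩ := Nat.exists_eq_add_of_lt h
        have := hagr i (by omega)
        simpa [show -((0 + i + 1 : ℕ) : ℤ) = -((i : ℤ) + 1) by push_cast; ring] using this
    intro j hj
    refine E_congr f E (hpos j (by omega)) ?_ _ _
    have := hpos (j + 1) (by omega)
    rwa [show -((j + 1 : ℕ) : ℤ) = -(j : ℤ) - 1 by push_cast; ring] at this
  · intro hc j hj
    have := code_pos_agree x₀ E x y hc (j + 1) (by omega)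
    rwa [show -((j + 1 : ℕ) : ℤ) = -((j : ℤ) + 1) by push_cast; ring] at this

end Aux3

/-- under the separation hypothesis, if every fiber of `f` has exactly
`k ≥ 2` elements, then each fiber `π⁻¹(x₀)` of `π : M_f → M`, with the topology
induced by the metric `d`, is homeomorphic to the Cantor space `ℕ → Fin k`. -/
theorem orbitFiber_homeomorph_cantor {M : Type*} [MetricSpace M] (f : M → M)
    (hsep : ∀ a b : M, a ≠ b → f a = f b → 1 ≤ dist a b)
    (k : ℕ) (hk : 2 ≤ k)
    (hfib : ∀ y : M, (f ⁻¹' {y}).ncard = k)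
    (lam : ℝ) (hlam0 : 0 < lam) (hlam1 : lam < 1)
    (x₀ : M) :
    Nonempty (@Homeomorph (OrbitFiber f x₀) (ℕ → Fin k)
      (orbitFiberTopology f lam x₀) inferInstance) := by
  classical
  letI T : TopologicalSpace (OrbitFiber f x₀) := orbitFiberTopology f lam x₀
  have hT : T = TopologicalSpace.generateFrom
      {U | ∃ (y : OrbitFiber f x₀) (r : ℝ), 0 < r ∧
        U = {z : OrbitFiber f x₀ | orbitDist lam y.1 z.1 < r}} := rfl
  let E : ∀ a : M, (f ⁻¹' {a}) ≃ Fin k := preimEquiv (by omega) hfib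
  let e : OrbitFiber f x₀ ≃ (ℕ → Fin k) := fiberEquivCantor x₀ E
  have key : ∀ (y z : OrbitFiber f x₀) (r : ℝ) (n : ℕ), lam ^ (n + 1) < r →
      (∀ j : ℕ, j < n → r ≤ lam ^ (j + 1)) →
      (orbitDist lam y.1 z.1 < r ↔ ∀ j : ℕ, j < n → fiberCode x₀ E y j = fiberCode x₀ E z j) := by
    intro y z r n h1 h2
    rw [orbitDist_lt_iff hsep hlam0 hlam1 y.2.1 z.2.1 (y.2.2.trans z.2.2.symm) h1 h2]
    exact agr_iff_code x₀ E y z n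
  have hpowlt : ∀ i : ℕ, lam ^ (i + 1 + 1) < lam ^ (i + 1) :=
    fun i => pow_lt_pow_right_of_lt_one₀ hlam0 hlam1 (by omega)
  have hpowle : ∀ i j : ℕ, j < i + 1 → lam ^ (i + 1) ≤ lam ^ (j + 1) :=
    fun i j hj => pow_le_pow_of_le_one hlam0.le hlam1.le (by omega)
  have hcont1 : @Continuous _ _ T _ e := by
    refine continuous_pi fun i => continuous_discrete_rng.2 fun v => ?_
    have hset : (fun x => e x i) ⁻¹' {v} =
        ⋃ y ∈ {y : OrbitFiber f x₀ | fiberCode x₀ E y i = v},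
          {z : OrbitFiber f x₀ | orbitDist lam y.1 z.1 < lam ^ (i + 1)} := by
      ext z
      simp only [Set.mem_preimage, Set.mem_singleton_iff, Set.mem_iUnion, Set.mem_setOf_eq]
      constructor
      · intro hz
        exact ⟨z, hz, (key z z _ (i + 1) (hpowlt i) (hpowle i)).2 fun _ _ => rfl⟩
      · rintro ⟨y, hy, hd⟩
        have := (key y z _ (i + 1) (hpowlt i) (hpowle i)).1 hd i (by omega)
        exact (this.symm.trans hy : fiberCode x₀ E z i = v)
    rw [show (fun x : OrbitFiber f x₀ => e x i) = fun x => fiberCode x₀ E x i from rfl] at hset ⊢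
    rw [hset]
    exact isOpen_biUnion fun y _ =>
      TopologicalSpace.isOpen_generateFrom_of_mem ⟨y, lam ^ (i + 1), by positivity, rfl⟩
  have hcont2 : @Continuous _ _ _ T e.symm := by
    rw [hT]
    refine continuous_generateFrom_iff.2 ?_
    rintro U ⟨y, r, hr, rfl⟩
    obtain ⟨n, hn, hn'⟩ : ∃ n : ℕ, lam ^ (n + 1) < r ∧ ∀ j : ℕ, j < n → r ≤ lam ^ (j + 1) := by
      have hex := exists_pow_index hlam0 hlam1 hr
      exact ⟨Nat.find hex, Nat.find_spec hex, fun j hj => le_of_not_gt (Nat.find_min hex hj)⟩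
    have hset : e.symm ⁻¹' {z : OrbitFiber f x₀ | orbitDist lam y.1 z.1 < r} =
        ⋂ j ∈ Finset.range n, {s : ℕ → Fin k | s j = fiberCode x₀ E y j} := by
      ext s
      simp only [Set.mem_preimage, Set.mem_setOf_eq, Set.mem_iInter, Finset.mem_range]
      rw [key y (e.symm s) r n hn hn']
      constructor
      · intro h j hj
        have h2 : fiberCode x₀ E (e.symm s) j = s j := congrFun (e.apply_symm_apply s) j
        exact ((h j hj).trans h2).symm
      · intro h j hj
        have h2 : fiberCode x₀ E (e.symm s) j = s j := congrFun (e.apply_symm_apply s) j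
        exact (h2.trans (h j hj)).symm
    rw [hset]
    refine isOpen_biInter_finset fun j _ => ?_
    show IsOpen ((fun s : ℕ → Fin k => s j) ⁻¹' {fiberCode x₀ E y j})
    exact IsOpen.preimage (continuous_apply j) (isOpen_discrete _)
  exact ⟨{ toEquiv := e, continuous_toFun := hcont1, continuous_invFun := hcont2 }⟩
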